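/- For every prime p ≡ 1 (mod 4) with p ≥ 13 there exists a circulant complex Hadamard matrix of order p that is not equivalent to the Fourier matrix F_p. -/

import Mathlib

open Matrix

/-- `H` is a complex Hadamard matrix: unimodular entries and `H Hᴴ = n • I`. -/
def IsCHadamard {n : Type*} [Fintype n] [DecidableEq n] (H : Matrix n n ℂ) : Prop :=
  (∀ i j, ‖H i j‖ = 1) ∧
    H * H.conjTranspose = (Fintype.card n : ℂ) • 1

/-- Equivalence of complex Hadamard matrices: `H = P₁ D₁ K D₂ P₂` with permutation
matrices `P₁, P₂` and unitary diagonal matrices `D₁, D₂`. -/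
def HadEquiv {n : Type*} [Fintype n] [DecidableEq n] (H K : Matrix n n ℂ) : Prop :=
  ∃ (σ τ : Equiv.Perm n) (d₁ d₂ : n → ℂ),
    (∀ i, ‖d₁ i‖ = 1) ∧ (∀ i, ‖d₂ i‖ = 1) ∧
    H = σ.permMatrix ℂ * Matrix.diagonal d₁ * K * Matrix.diagonal d₂ * τ.permMatrix ℂ

/-- A matrix is circulant if its `(j,k)` entry depends only on `k - j`. -/
def IsCirculant {p : ℕ} (H : Matrix (Fin p) (Fin p) ℂ) : Prop :=
  ∃ g : Fin p → ℂ, ∀ j k, H j k = g (k - j)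

/-- The Fourier matrix of order `p`. -/
noncomputable def FourierMatrix (p : ℕ) : Matrix (Fin p) (Fin p) ℂ :=
  Matrix.of fun j k =>
    Complex.exp (2 * Real.pi * Complex.I * ((j : ℕ) * (k : ℕ)) / p)

namespace CHadAux

open Complex Polynomial

/-- The real part of Björck's unimodular number. -/
noncomputable def xx (p : ℕ) : ℝ := 1 / (1 + Real.sqrt p)

/-- The imaginary part of Björck's unimodular number. -/
noncomputable def yy (p : ℕ) : ℝ := Real.sqrt (1 - xx p ^ 2)

/-- Björck's unimodular number. -/
noncomputable def aa (p : ℕ) : ℂ := (xx p : ℂ) + (yy p : ℂ) * Complex.I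

/-- The quadratic character cast to `ℂ`. -/
noncomputable def cc (p : ℕ) [Fact p.Prime] (t : ZMod p) : ℂ :=
  ((quadraticChar (ZMod p) t : ℤ) : ℂ)

/-- The Björck sequence. -/
noncomputable def gg (p : ℕ) [Fact p.Prime] (t : ZMod p) : ℂ :=
  1 + (yy p : ℂ) * Complex.I * cc p t + ((xx p : ℂ) - 1) * (cc p t) ^ 2

/-- The circulant matrix built from the Björck sequence. -/
noncomputable def HH (p : ℕ) [Fact p.Prime] : Matrix (Fin p) (Fin p) ℂ :=
  Matrix.of fun j k => gg p (((k : ℕ) : ZMod p) - ((j : ℕ) : ZMod p))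

section basic

variable (p : ℕ) [hpf : Fact p.Prime]

lemma sqrtp_pos (hp13 : 13 ≤ p) : 0 < Real.sqrt p := by
  apply Real.sqrt_pos.mpr; positivity

lemma sqrtp_sq : Real.sqrt p ^ 2 = p := Real.sq_sqrt (by positivity)

lemma xx_pos (hp13 : 13 ≤ p) : 0 < xx p := by
  unfold xx
  have := Real.sqrt_nonneg (p : ℝ)
  positivity

lemma xx_le_one : xx p ≤ 1 := by
  unfold xx
  have h := Real.sqrt_nonneg (p : ℝ)
  rw [div_le_one (by linarith)]
  linarith

lemma xx_sq_le_one (hp13 : 13 ≤ p) : xx p ^ 2 ≤ 1 := by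
  have h1 := xx_pos p hp13
  have h2 := xx_le_one p
  nlinarith

lemma yy_sq (hp13 : 13 ≤ p) : yy p ^ 2 = 1 - xx p ^ 2 := by
  unfold yy
  rw [Real.sq_sqrt]
  linarith [xx_sq_le_one p hp13]

lemma aa_abs (hp13 : 13 ≤ p) : ‖aa p‖ = 1 := by
  have h : Complex.normSq (aa p) = 1 := by
    simp only [aa, Complex.normSq_apply, Complex.add_re, Complex.ofReal_re, Complex.mul_re,
      Complex.I_re, Complex.ofReal_im, Complex.I_im, Complex.add_im, Complex.mul_im]
    ring_nf
    rw [yy_sq p hp13]; ring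
  rw [← Complex.sq_norm] at h
  nlinarith [norm_nonneg (aa p)]

end basic


section charsums

variable (p : ℕ) [hpf : Fact p.Prime]

lemma pchar_ne_two (hmod : p % 4 = 1) : ringChar (ZMod p) ≠ 2 := by
  rw [ZMod.ringChar_zmod_n]; omega

lemma sum_chi (hmod : p % 4 = 1) : ∑ t : ZMod p, quadraticChar (ZMod p) t = 0 :=
  quadraticChar_sum_zero (pchar_ne_two p hmod)

lemma chi_neg_one (hmod : p % 4 = 1) : quadraticChar (ZMod p) (-1) = 1 := by
  rw [quadraticChar_neg_one (pchar_ne_two p hmod), ZMod.card, ZMod.χ₄_nat_eq_if_mod_four]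
  have h2 : p % 2 = 1 := by omega
  simp [h2, hmod]

lemma chi_shift (s : ZMod p) :
    ∑ t : ZMod p, quadraticChar (ZMod p) (t + s) = ∑ t : ZMod p, quadraticChar (ZMod p) t :=
  Fintype.sum_equiv (Equiv.addRight s) _ _ (fun _ => rfl)

lemma sum3 (hmod : p % 4 = 1) {s : ZMod p} (hs : s ≠ 0) :
    ∑ t : ZMod p, quadraticChar (ZMod p) t * quadraticChar (ZMod p) (t + s) = -1 := by
  classical
  have h0 : quadraticChar (ZMod p) 0 * quadraticChar (ZMod p) (0 + s) = 0 := by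
    simp [quadraticChar_zero]
  rw [← Finset.sum_erase (f := fun t : ZMod p =>
    quadraticChar (ZMod p) t * quadraticChar (ZMod p) (t + s)) Finset.univ h0]
  have h1 : ∀ t ∈ Finset.univ.erase (0 : ZMod p),
      quadraticChar (ZMod p) t * quadraticChar (ZMod p) (t + s)
        = quadraticChar (ZMod p) (1 + s * t⁻¹) := by
    intro t ht
    have ht0 : t ≠ 0 := Finset.ne_of_mem_erase ht
    have hmul : t * (t + s) = t ^ 2 * (1 + s * t⁻¹) := by
      field_simp
    rw [← _root_.map_mul, hmul, _root_.map_mul, quadraticChar_sq_one' ht0, one_mul]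
  rw [Finset.sum_congr rfl h1]
  have h2 : ∑ t ∈ Finset.univ.erase (0 : ZMod p), quadraticChar (ZMod p) (1 + s * t⁻¹)
      = ∑ u ∈ Finset.univ.erase (1 : ZMod p), quadraticChar (ZMod p) u := by
    apply Finset.sum_nbij' (fun t => 1 + s * t⁻¹) (fun u => s * (u - 1)⁻¹)
    · intro t ht
      have ht0 : t ≠ 0 := Finset.ne_of_mem_erase ht
      have : s * t⁻¹ ≠ 0 := by
        simp [hs, ht0]
      simp only [Finset.mem_erase, Finset.mem_univ, and_true]
      intro h
      apply this
      linear_combination h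
    · intro u hu
      have hu1 : u ≠ 1 := Finset.ne_of_mem_erase hu
      have : u - 1 ≠ 0 := sub_ne_zero.mpr hu1
      simp only [Finset.mem_erase, Finset.mem_univ, and_true]
      simp [hs, this]
    · intro t ht
      have ht0 : t ≠ 0 := Finset.ne_of_mem_erase ht
      field_simp
      simp [hs]
    · intro u hu
      have hu1 : u ≠ 1 := Finset.ne_of_mem_erase hu
      have h1 : u - 1 ≠ 0 := sub_ne_zero.mpr hu1
      field_simp
      ring
    · intro t ht; rfl
  rw [h2, Finset.sum_erase_eq_sub (Finset.mem_univ (1 : ZMod p)), sum_chi p hmod, _root_.map_one]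
  ring

lemma sum4 (hmod : p % 4 = 1) (s : ZMod p) :
    ∑ t : ZMod p, quadraticChar (ZMod p) t ^ 2 * quadraticChar (ZMod p) (t + s)
      = -quadraticChar (ZMod p) s := by
  classical
  have h1 : ∀ t : ZMod p, quadraticChar (ZMod p) t ^ 2 * quadraticChar (ZMod p) (t + s)
      = quadraticChar (ZMod p) (t + s) - (if t = 0 then quadraticChar (ZMod p) s else 0) := by
    intro t
    by_cases ht : t = 0
    · simp [ht, quadraticChar_zero]
    · rw [quadraticChar_sq_one ht, one_mul, if_neg ht, sub_zero]
  rw [Finset.sum_congr rfl (fun t _ => h1 t), Finset.sum_sub_distrib, chi_shift, sum_chi p hmod,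
    Finset.sum_ite_eq' Finset.univ (0 : ZMod p) (fun _ => quadraticChar (ZMod p) s)]
  simp

lemma sum5 (hmod : p % 4 = 1) (s : ZMod p) :
    ∑ t : ZMod p, quadraticChar (ZMod p) t * quadraticChar (ZMod p) (t + s) ^ 2
      = -quadraticChar (ZMod p) s := by
  classical
  have h1 : ∀ t : ZMod p, quadraticChar (ZMod p) t * quadraticChar (ZMod p) (t + s) ^ 2
      = quadraticChar (ZMod p) t - (if t = -s then quadraticChar (ZMod p) (-s) else 0) := by
    intro t
    by_cases ht : t = -s
    · have : t + s = 0 := by rw [ht]; ring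
      simp [this, quadraticChar_zero, ht]
    · have : t + s ≠ 0 := by
        intro h; apply ht; linear_combination h
      rw [quadraticChar_sq_one this, mul_one, if_neg ht, sub_zero]
  rw [Finset.sum_congr rfl (fun t _ => h1 t), Finset.sum_sub_distrib, sum_chi p hmod,
    Finset.sum_ite_eq' Finset.univ (-s : ZMod p) (fun _ => quadraticChar (ZMod p) (-s))]
  have : quadraticChar (ZMod p) (-s) = quadraticChar (ZMod p) s := by
    have := map_mul (quadraticChar (ZMod p)) (-1) s
    rw [chi_neg_one p hmod, one_mul] at this
    rw [← this]; ring_nf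
  simp [this]

lemma sum9 (hmod : p % 4 = 1) {s : ZMod p} (hs : s ≠ 0) :
    ∑ t : ZMod p, quadraticChar (ZMod p) t ^ 2 * quadraticChar (ZMod p) (t + s) ^ 2
      = (p : ℤ) - 2 := by
  classical
  have h1 : ∀ t : ZMod p, quadraticChar (ZMod p) t ^ 2 * quadraticChar (ZMod p) (t + s) ^ 2
      = 1 - (if t = 0 then 1 else 0) - (if t = -s then 1 else 0) := by
    intro t
    have h0s : (0 : ZMod p) ≠ -s := by
      intro h
      exact hs (neg_eq_zero.mp h.symm)
    by_cases ht : t = 0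
    · simp [ht, h0s, quadraticChar_zero]
    · by_cases hts : t = -s
      · have : t + s = 0 := by rw [hts]; ring
        simp [this, ht, hts, quadraticChar_zero, hs]
      · have h2 : t + s ≠ 0 := by
          intro h; exact hts (by linear_combination h)
        rw [quadraticChar_sq_one ht, quadraticChar_sq_one h2, if_neg ht, if_neg hts]
        ring
  rw [Finset.sum_congr rfl (fun t _ => h1 t), Finset.sum_sub_distrib, Finset.sum_sub_distrib,
    Finset.sum_ite_eq' Finset.univ (0 : ZMod p) (fun _ => (1 : ℤ)),
    Finset.sum_ite_eq' Finset.univ (-s : ZMod p) (fun _ => (1 : ℤ))]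
  simp only [Finset.mem_univ, if_true, Finset.sum_const, Finset.card_univ, ZMod.card, nsmul_eq_mul, mul_one]
  ring

lemma sum2 : ∑ t : ZMod p, quadraticChar (ZMod p) t ^ 2 = (p : ℤ) - 1 := by
  classical
  have h1 : ∀ t : ZMod p, quadraticChar (ZMod p) t ^ 2 = 1 - (if t = 0 then 1 else 0) := by
    intro t
    by_cases ht : t = 0
    · simp [ht, quadraticChar_zero]
    · rw [quadraticChar_sq_one ht, if_neg ht]; ring
  rw [Finset.sum_congr rfl (fun t _ => h1 t), Finset.sum_sub_distrib,
    Finset.sum_ite_eq' Finset.univ (0 : ZMod p) (fun _ => (1 : ℤ))]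
  simp [ZMod.card]

end charsums


section keysum

variable (p : ℕ) [hpf : Fact p.Prime]

lemma cc_zero : cc p 0 = 0 := by simp [cc, quadraticChar_zero]

lemma cc_one : cc p 1 = 1 := by simp [cc]

lemma cc_neg_one (hmod : p % 4 = 1) : cc p (-1) = 1 := by
  simp [cc, chi_neg_one p hmod]

lemma gg_of_cc_zero {t : ZMod p} (h : cc p t = 0) : gg p t = 1 := by
  simp [gg, h]

lemma gg_of_cc_one {t : ZMod p} (h : cc p t = 1) : gg p t = aa p := by
  simp only [gg, h, one_pow, mul_one, aa]; ring

lemma gg_of_cc_neg_one {t : ZMod p} (h : cc p t = -1) :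
    gg p t = (starRingEnd ℂ) (aa p) := by
  simp only [gg, h, aa, _root_.map_add, _root_.map_mul, Complex.conj_ofReal, Complex.conj_I]
  ring

lemma cc_cases (t : ZMod p) : cc p t = 0 ∨ cc p t = 1 ∨ cc p t = -1 := by
  by_cases ht : t = 0
  · left; simp [ht, cc_zero]
  · rcases quadraticChar_dichotomy ht with h | h
    · right; left; simp [cc, h]
    · right; right; simp [cc, h]

lemma abs_gg (hp13 : 13 ≤ p) (t : ZMod p) : ‖gg p t‖ = 1 := by
  rcases cc_cases p t with h | h | h
  · rw [gg_of_cc_zero p h]; simp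
  · rw [gg_of_cc_one p h]; exact aa_abs p hp13
  · rw [gg_of_cc_neg_one p h, Complex.norm_conj]; exact aa_abs p hp13

lemma conj_gg (u : ZMod p) :
    (starRingEnd ℂ) (gg p u)
      = 1 - (yy p : ℂ) * Complex.I * cc p u + ((xx p : ℂ) - 1) * (cc p u) ^ 2 := by
  simp only [gg, cc, _root_.map_add, _root_.map_mul, _root_.map_one, _root_.map_sub,
    _root_.map_pow, map_intCast, Complex.conj_ofReal, Complex.conj_I]
  ring

lemma real_key (hp13 : 13 ≤ p) :
    (p : ℝ) - (1 - xx p ^ 2) + 2 * (xx p - 1) * ((p : ℝ) - 1)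
      + (xx p - 1) ^ 2 * ((p : ℝ) - 2) = 0 := by
  have hr : Real.sqrt p ^ 2 = p := sqrtp_sq p
  have hrpos : 0 < Real.sqrt p := sqrtp_pos p hp13
  have key : ∀ r : ℝ, 0 < r →
      (r ^ 2) - (1 - (1 / (1 + r)) ^ 2) + 2 * ((1 / (1 + r)) - 1) * (r ^ 2 - 1)
        + ((1 / (1 + r)) - 1) ^ 2 * (r ^ 2 - 2) = 0 := by
    intro r hr0
    have h1 : 1 + r ≠ 0 := by positivity
    field_simp
    ring
  have h2 := key (Real.sqrt p) hrpos
  rw [hr] at h2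
  unfold xx
  exact h2

-- ℂ-level sums
lemma csum2 : ∑ t : ZMod p, (cc p t) ^ 2 = (p : ℂ) - 1 := by
  simp only [cc]
  exact_mod_cast sum2 p

lemma csum1 (hmod : p % 4 = 1) : ∑ t : ZMod p, cc p t = 0 := by
  simp only [cc]
  exact_mod_cast sum_chi p hmod

lemma csum1' (hmod : p % 4 = 1) (s : ZMod p) : ∑ t : ZMod p, cc p (t + s) = 0 := by
  rw [Fintype.sum_equiv (Equiv.addRight s) (fun t => cc p (t + s)) (fun t => cc p t)
    (fun _ => rfl)]
  exact csum1 p hmod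

lemma csum2' (s : ZMod p) : ∑ t : ZMod p, (cc p (t + s)) ^ 2 = (p : ℂ) - 1 := by
  rw [Fintype.sum_equiv (Equiv.addRight s) (fun t => (cc p (t + s)) ^ 2)
    (fun t => (cc p t) ^ 2) (fun _ => rfl)]
  exact csum2 p

lemma csum3 (hmod : p % 4 = 1) {s : ZMod p} (hs : s ≠ 0) :
    ∑ t : ZMod p, cc p t * cc p (t + s) = -1 := by
  simp only [cc]
  exact_mod_cast sum3 p hmod hs

lemma csum4 (hmod : p % 4 = 1) (s : ZMod p) :
    ∑ t : ZMod p, (cc p t) ^ 2 * cc p (t + s) = -cc p s := by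
  simp only [cc]
  exact_mod_cast sum4 p hmod s

lemma csum5 (hmod : p % 4 = 1) (s : ZMod p) :
    ∑ t : ZMod p, cc p t * (cc p (t + s)) ^ 2 = -cc p s := by
  simp only [cc]
  exact_mod_cast sum5 p hmod s

lemma csum9 (hmod : p % 4 = 1) {s : ZMod p} (hs : s ≠ 0) :
    ∑ t : ZMod p, (cc p t) ^ 2 * (cc p (t + s)) ^ 2 = (p : ℂ) - 2 := by
  simp only [cc]
  exact_mod_cast sum9 p hmod hs

lemma key (hmod : p % 4 = 1) (hp13 : 13 ≤ p) (s : ZMod p) :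
    ∑ t : ZMod p, gg p t * (starRingEnd ℂ) (gg p (t + s))
      = if s = 0 then (p : ℂ) else 0 := by
  by_cases hs : s = 0
  · subst hs
    rw [if_pos rfl]
    have h1 : ∀ t : ZMod p, gg p t * (starRingEnd ℂ) (gg p (t + 0)) = 1 := by
      intro t
      rw [add_zero, Complex.mul_conj, Complex.normSq_eq_norm_sq, abs_gg p hp13 t]
      norm_num
    rw [Finset.sum_congr rfl (fun t _ => h1 t)]
    simp [Finset.card_univ, ZMod.card]
  · rw [if_neg hs]
    have expand : ∀ t : ZMod p, gg p t * (starRingEnd ℂ) (gg p (t + s))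
        = 1
          + (-((yy p : ℂ) * Complex.I)) * cc p (t + s)
          + ((xx p : ℂ) - 1) * (cc p (t + s)) ^ 2
          + ((yy p : ℂ) * Complex.I) * cc p t
          + (-(((yy p : ℂ) * Complex.I) ^ 2)) * (cc p t * cc p (t + s))
          + (((yy p : ℂ) * Complex.I) * ((xx p : ℂ) - 1)) * (cc p t * (cc p (t + s)) ^ 2)
          + ((xx p : ℂ) - 1) * (cc p t) ^ 2
          + (-((yy p : ℂ) * Complex.I) * ((xx p : ℂ) - 1)) * ((cc p t) ^ 2 * cc p (t + s))
          + ((xx p : ℂ) - 1) ^ 2 * ((cc p t) ^ 2 * (cc p (t + s)) ^ 2) := by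
      intro t
      rw [gg, conj_gg]
      ring
    rw [Finset.sum_congr rfl (fun t _ => expand t)]
    simp only [Finset.sum_add_distrib, ← Finset.mul_sum]
    rw [csum1' p hmod s, csum2' p s, csum1 p hmod, csum3 p hmod hs, csum4 p hmod s,
      csum5 p hmod s, csum2 p, csum9 p hmod hs]
    have hy : ((yy p : ℝ) : ℂ) ^ 2 = 1 - ((xx p : ℝ) : ℂ) ^ 2 := by
      rw [← Complex.ofReal_pow, yy_sq p hp13]
      push_cast; ring
    have hx : ((p : ℝ) : ℂ) - (1 - ((xx p : ℝ) : ℂ) ^ 2)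
        + 2 * (((xx p : ℝ) : ℂ) - 1) * (((p : ℝ) : ℂ) - 1)
        + (((xx p : ℝ) : ℂ) - 1) ^ 2 * (((p : ℝ) : ℂ) - 2) = 0 := by
      have := real_key p hp13
      exact_mod_cast congrArg (fun r : ℝ => (r : ℂ)) this
    have hcard : (((Finset.univ : Finset (ZMod p)).card : ℕ) : ℂ) = (p : ℂ) := by
      simp [Finset.card_univ, ZMod.card]
    simp only [Finset.sum_const, nsmul_eq_mul, mul_one]
    push_cast at hx ⊢
    linear_combination hcard + hx + Complex.I ^ 2 * hy
      + (1 - ((xx p : ℝ) : ℂ) ^ 2) * Complex.I_sq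
end keysum


section matrixpart

variable (p : ℕ) [hpf : Fact p.Prime]

/-- The equivalence between `Fin p` and `ZMod p`. -/
def eZ : Fin p ≃ ZMod p where
  toFun i := ((i : ℕ) : ZMod p)
  invFun z := ⟨z.val, z.val_lt⟩
  left_inv i := by
    ext
    simp [ZMod.val_cast_of_lt i.isLt]
  right_inv z := ZMod.natCast_rightInverse z

lemma HH_apply (j k : Fin p) :
    HH p j k = gg p (((k : ℕ) : ZMod p) - ((j : ℕ) : ZMod p)) := rfl

lemma eZ_inj {j k : Fin p} (h : ((j : ℕ) : ZMod p) = ((k : ℕ) : ZMod p)) : j = k :=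
  (eZ p).injective h

lemma HH_hadamard (hmod : p % 4 = 1) (hp13 : 13 ≤ p) : IsCHadamard (HH p) := by
  unfold IsCHadamard
  constructor
  · intro i j
    exact abs_gg p hp13 _
  · ext j k
    rw [Matrix.mul_apply]
    have hent : ∀ t : Fin p, HH p j t * (HH p).conjTranspose t k
        = gg p (((t : ℕ) : ZMod p) - ((j : ℕ) : ZMod p))
          * (starRingEnd ℂ) (gg p (((t : ℕ) : ZMod p) - ((k : ℕ) : ZMod p))) := by
      intro t
      rw [Matrix.conjTranspose_apply, HH_apply, HH_apply, Complex.star_def]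
    rw [Finset.sum_congr rfl (fun t _ => hent t)]
    set J : ZMod p := ((j : ℕ) : ZMod p)
    set K : ZMod p := ((k : ℕ) : ZMod p)
    have h1 : ∑ t : Fin p, gg p (((t : ℕ) : ZMod p) - J) * (starRingEnd ℂ) (gg p (((t : ℕ) : ZMod p) - K))
        = ∑ u : ZMod p, gg p (u - J) * (starRingEnd ℂ) (gg p (u - K)) :=
      Fintype.sum_equiv (eZ p) _ _ (fun t => rfl)
    rw [h1]
    have h2 : ∑ u : ZMod p, gg p (u - J) * (starRingEnd ℂ) (gg p (u - K))
        = ∑ v : ZMod p, gg p v * (starRingEnd ℂ) (gg p (v + (J - K))) := by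
      refine (Fintype.sum_equiv (Equiv.addRight J) _ _ (fun v => ?_)).symm
      have e1 : (Equiv.addRight J) v - J = v := by
        simp [Equiv.coe_addRight]
      have e2 : (Equiv.addRight J) v - K = v + (J - K) := by
        simp [Equiv.coe_addRight]; ring
      rw [e1, e2]
    rw [h2, key p hmod hp13 (J - K)]
    have hiff : J - K = 0 ↔ j = k := by
      constructor
      · intro h
        exact eZ_inj p (by linear_combination h)
      · intro h; simp only [J, K, h]; ring
    by_cases hjk : j = k
    · rw [if_pos (hiff.mpr hjk), Matrix.smul_apply, hjk, Matrix.one_apply_eq, smul_eq_mul,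
        mul_one, Fintype.card_fin]
    · rw [if_neg (fun h => hjk (hiff.mp h)), Matrix.smul_apply,
        Matrix.one_apply_ne (fun h => hjk h), smul_zero]

lemma HH_circulant : IsCirculant (HH p) := by
  refine ⟨fun d => gg p ((d : ℕ) : ZMod p), fun j k => ?_⟩
  rw [HH_apply]
  congr 1
  have hsub : ((k - j : Fin p) : ℕ) = ((p - (j : ℕ)) + (k : ℕ)) % p := by
    rw [Fin.sub_def]
  rw [hsub, ZMod.natCast_mod, Nat.cast_add, Nat.cast_sub (le_of_lt j.isLt),
    ZMod.natCast_self]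
  ring

end matrixpart


section inequiv

variable (p : ℕ) [hpf : Fact p.Prime]

lemma five_entry (σ τ : Equiv.Perm (Fin p)) (d₁ d₂ : Fin p → ℂ)
    (K : Matrix (Fin p) (Fin p) ℂ) (i j : Fin p) :
    (σ.permMatrix ℂ * Matrix.diagonal d₁ * K * Matrix.diagonal d₂ * τ.permMatrix ℂ) i j
      = d₁ (σ i) * K (σ i) (τ.symm j) * d₂ (τ.symm j) := by
  have h : σ.permMatrix ℂ * Matrix.diagonal d₁ * K * Matrix.diagonal d₂ * τ.permMatrix ℂ
      = σ.toPEquiv.toMatrix * (Matrix.diagonal d₁ * K * Matrix.diagonal d₂)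
        * τ.toPEquiv.toMatrix := by
    simp only [Equiv.Perm.permMatrix, Matrix.mul_assoc]
  rw [h, PEquiv.mul_toMatrix_toPEquiv, PEquiv.toMatrix_toPEquiv_mul]
  rw [Matrix.submatrix_apply, Matrix.submatrix_apply]
  rw [Matrix.mul_diagonal, Matrix.diagonal_mul]
  simp only [id]

lemma unimod_mul_conj {d : ℂ} (h : ‖d‖ = 1) : d * (starRingEnd ℂ) d = 1 := by
  rw [Complex.mul_conj, Complex.normSq_eq_norm_sq, h]
  norm_num

lemma fourier_quad (hp0 : p ≠ 0) (A B C D : Fin p) :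
    (FourierMatrix p A B * FourierMatrix p C D
      * (starRingEnd ℂ) (FourierMatrix p A D) * (starRingEnd ℂ) (FourierMatrix p C B)) ^ p
      = 1 := by
  unfold FourierMatrix
  simp only [Matrix.of_apply]
  rw [← Complex.exp_conj, ← Complex.exp_conj]
  have hc : ∀ M N : Fin p, (starRingEnd ℂ) (2 * (Real.pi : ℂ) * Complex.I
      * (((M : ℕ) : ℂ) * ((N : ℕ) : ℂ)) / (p : ℂ))
      = -(2 * (Real.pi : ℂ) * Complex.I * (((M : ℕ) : ℂ) * ((N : ℕ) : ℂ)) / (p : ℂ)) := by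
    intro M N
    simp only [map_div₀, _root_.map_mul, Complex.conj_I, Complex.conj_ofReal,
      Complex.conj_natCast, map_ofNat]
    ring
  rw [hc, hc]
  rw [← Complex.exp_add, ← Complex.exp_add, ← Complex.exp_add, ← Complex.exp_nat_mul]
  set n : ℤ := (((A : ℕ) : ℤ) - ((C : ℕ) : ℤ)) * (((B : ℕ) : ℤ) - ((D : ℕ) : ℤ)) with hn
  have harg : (p : ℂ) * (2 * (Real.pi : ℂ) * Complex.I * (((A : ℕ) : ℂ) * ((B : ℕ) : ℂ)) / (p : ℂ)
      + 2 * (Real.pi : ℂ) * Complex.I * (((C : ℕ) : ℂ) * ((D : ℕ) : ℂ)) / (p : ℂ)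
      + -(2 * (Real.pi : ℂ) * Complex.I * (((A : ℕ) : ℂ) * ((D : ℕ) : ℂ)) / (p : ℂ))
      + -(2 * (Real.pi : ℂ) * Complex.I * (((C : ℕ) : ℂ) * ((B : ℕ) : ℂ)) / (p : ℂ)))
      = (n : ℂ) * (2 * (Real.pi : ℂ) * Complex.I) := by
    have hpc : (p : ℂ) ≠ 0 := Nat.cast_ne_zero.mpr hp0
    field_simp
    push_cast [hn]
    ring
  rw [harg, Complex.exp_int_mul_two_pi_mul_I]

lemma real_key2 (hp13 : 13 ≤ p) :
    (2 * xx p) ^ 2 + (4 / ((p : ℝ) - 1)) * (2 * xx p) - 4 / ((p : ℝ) - 1) = 0 := by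
  have hr : Real.sqrt p ^ 2 = p := sqrtp_sq p
  have hrpos : 0 < Real.sqrt p := sqrtp_pos p hp13
  have hr1 : (1 : ℝ) < Real.sqrt p := by
    have h13 : (13 : ℝ) ≤ (p : ℝ) := by exact_mod_cast hp13
    nlinarith [hr, hrpos, h13, sq_nonneg (Real.sqrt p - 1)]
  have key : ∀ r : ℝ, 1 < r →
      (2 * (1 / (1 + r))) ^ 2 + (4 / (r ^ 2 - 1)) * (2 * (1 / (1 + r)))
        - 4 / (r ^ 2 - 1) = 0 := by
    intro r hr0
    have h1 : 1 + r ≠ 0 := by nlinarith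
    have h2 : r ^ 2 - 1 ≠ 0 := by nlinarith
    field_simp
    ring
  have h2 := key (Real.sqrt p) hr1
  rw [hr] at h2
  unfold xx
  exact h2

lemma aa_pow_ne_one (hmod : p % 4 = 1) (hp13 : 13 ≤ p) : (aa p) ^ (2 * p) ≠ 1 := by
  intro h
  have hp0 : 2 * p ≠ 0 := by omega
  have hint : IsIntegral ℤ (aa p) := by
    refine ⟨Polynomial.X ^ (2 * p) - Polynomial.C 1, Polynomial.monic_X_pow_sub_C 1 hp0, ?_⟩
    simp [h]
  have hane : aa p ≠ 0 := by
    intro h0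
    have := aa_abs p hp13
    rw [h0] at this
    simp at this
  have hconj : (starRingEnd ℂ) (aa p) = aa p ^ (2 * p - 1) := by
    apply mul_left_cancel₀ hane
    rw [unimod_mul_conj (aa_abs p hp13), ← pow_succ']
    have : 2 * p - 1 + 1 = 2 * p := by omega
    rw [this, h]
  set t : ℂ := aa p + (starRingEnd ℂ) (aa p) with hts
  have hti : IsIntegral ℤ t := by
    rw [hts, hconj]
    exact hint.add (hint.pow _)
  have ht : t = ((2 * xx p : ℝ) : ℂ) := by
    rw [hts]
    simp only [aa, map_add, _root_.map_mul, Complex.conj_ofReal, Complex.conj_I]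
    push_cast
    ring
  have hp1 : ((p : ℚ) - 1) ≠ 0 := by
    have : (13 : ℚ) ≤ (p : ℚ) := by exact_mod_cast hp13
    linarith
  set c1 : ℚ := 4 / ((p : ℚ) - 1) with hc1
  set q : Polynomial ℚ := Polynomial.C 1 * Polynomial.X ^ 2 + Polynomial.C c1 * Polynomial.X
      + Polynomial.C (-c1) with hqdef
  have hq_monic : q.Monic := by
    unfold q
    unfold Polynomial.Monic
    rw [Polynomial.leadingCoeff_quadratic (one_ne_zero)]
  have hq_deg : q.natDegree = 2 := Polynomial.natDegree_quadratic one_ne_zero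
  have hcast : ((c1 : ℚ) : ℂ) = 4 / ((p : ℂ) - 1) := by
    rw [hc1]
    push_cast
    ring
  have hp1c : ((p : ℂ) - 1) ≠ 0 := by
    intro h0
    have : ((p : ℝ) : ℂ) = ((1 : ℝ) : ℂ) := by
      push_cast
      linear_combination h0
    have hre : (p : ℝ) = 1 := Complex.ofReal_inj.mp this
    have : (13 : ℝ) ≤ (p : ℝ) := by exact_mod_cast hp13
    linarith
  have hq_eval : Polynomial.aeval t q = 0 := by
    rw [hqdef, ht]
    simp only [map_add, _root_.map_mul, Polynomial.aeval_X, Polynomial.aeval_C, map_pow,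
      _root_.map_one, one_mul, map_neg]
    rw [show ((algebraMap ℚ ℂ) c1) = ((c1 : ℚ) : ℂ) from rfl, hcast]
    have hrk := real_key2 p hp13
    have hrkc : (((2 * xx p) ^ 2 + (4 / ((p : ℝ) - 1)) * (2 * xx p)
        - 4 / ((p : ℝ) - 1) : ℝ) : ℂ) = 0 := by
      rw [hrk]; simp
    push_cast at hrkc ⊢
    have hp1r : ((p : ℝ) : ℂ) - 1 ≠ 0 := by push_cast; exact hp1c
    field_simp at hrkc ⊢
    linear_combination hrkc
  have hIQ : IsIntegral ℚ t := ⟨q, hq_monic, hq_eval⟩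
  have hirr : t ∉ (algebraMap ℚ ℂ).range := by
    rintro ⟨r₀, hr₀⟩
    have h2 : (r₀ : ℝ) = 2 * xx p := by
      have : ((r₀ : ℝ) : ℂ) = ((2 * xx p : ℝ) : ℂ) := by
        rw [← ht, ← hr₀]
        rfl
      exact Complex.ofReal_inj.mp this
    have hx0 : 0 < xx p := xx_pos p hp13
    have hr0ne : (r₀ : ℚ) ≠ 0 := by
      intro h0
      rw [h0] at h2
      simp at h2
      linarith
    apply (Nat.Prime.irrational_sqrt hpf.out)
    refine ⟨2 / r₀ - 1, ?_⟩
    have hxr : xx p = 1 / (1 + Real.sqrt p) := rfl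
    have hsp : 0 < 1 + Real.sqrt p := by positivity
    have hr0ne' : (r₀ : ℝ) ≠ 0 := by exact_mod_cast hr0ne
    push_cast
    rw [h2, hxr]
    field_simp
    ring
  have h2le : 2 ≤ (minpoly ℚ t).natDegree := (minpoly.two_le_natDegree_iff hIQ).mpr hirr
  have hdvd : minpoly ℚ t ∣ q := minpoly.dvd ℚ t hq_eval
  have hqmin : minpoly ℚ t = q := by
    apply Polynomial.eq_of_dvd_of_natDegree_le_of_leadingCoeff hdvd
    · rw [hq_deg]; exact h2le
    · rw [(minpoly.monic hIQ).leadingCoeff, hq_monic.leadingCoeff]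
  have hmap := minpoly.isIntegrallyClosed_eq_field_fractions' ℚ hti
  have hcoeff : (minpoly ℚ t).coeff 1 = c1 := by
    rw [hqmin, hqdef]
    simp [Polynomial.coeff_add, Polynomial.coeff_C_mul, Polynomial.coeff_X_pow,
      Polynomial.coeff_C]
  rw [hmap, Polynomial.coeff_map] at hcoeff
  set m : ℤ := (minpoly ℤ t).coeff 1 with hm
  have hmq : (m : ℚ) = c1 := hcoeff
  have hpos : 0 < c1 := by
    rw [hc1]
    have : (13 : ℚ) ≤ (p : ℚ) := by exact_mod_cast hp13
    apply div_pos
    · norm_num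
    · linarith
  have hlt : c1 < 1 := by
    rw [hc1]
    have : (13 : ℚ) ≤ (p : ℚ) := by exact_mod_cast hp13
    rw [div_lt_one (by linarith)]
    linarith
  rw [← hmq] at hpos hlt
  have h1 : 0 < m := by exact_mod_cast hpos
  have h2 : m < 1 := by exact_mod_cast hlt
  omega

end inequiv

end CHadAux

theorem stmt9 (p : ℕ) (hp : p.Prime) (hmod : p % 4 = 1) (hp13 : 13 ≤ p) :
    ∃ H : Matrix (Fin p) (Fin p) ℂ,
      IsCHadamard H ∧ IsCirculant H ∧ ¬ HadEquiv H (FourierMatrix p) := by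
  haveI : Fact p.Prime := ⟨hp⟩
  refine ⟨CHadAux.HH p, CHadAux.HH_hadamard p hmod hp13, CHadAux.HH_circulant p, ?_⟩
  rintro ⟨σ, τ, d₁, d₂, h1, h2, hEq⟩
  have hent : ∀ i j, CHadAux.HH p i j
      = d₁ (σ i) * FourierMatrix p (σ i) (τ.symm j) * d₂ (τ.symm j) := by
    intro i j
    rw [hEq]
    exact CHadAux.five_entry p σ τ d₁ d₂ (FourierMatrix p) i j
  set z0 : Fin p := ⟨0, by omega⟩ with hz0
  set u : Fin p := ⟨1, by omega⟩ with hu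
  have e0 : ((z0 : ℕ) : ZMod p) = 0 := by rw [hz0]; simp
  have e1 : ((u : ℕ) : ZMod p) = 1 := by rw [hu]; simp
  have hv1 : CHadAux.HH p z0 u = CHadAux.aa p := by
    rw [CHadAux.HH_apply, e0, e1, sub_zero, CHadAux.gg_of_cc_one p (CHadAux.cc_one p)]
  have hv2 : CHadAux.HH p u z0 = CHadAux.aa p := by
    rw [CHadAux.HH_apply, e0, e1, zero_sub, CHadAux.gg_of_cc_one p (CHadAux.cc_neg_one p hmod)]
  have hv3 : CHadAux.HH p z0 z0 = 1 := by
    rw [CHadAux.HH_apply, e0, sub_zero, CHadAux.gg_of_cc_zero p (CHadAux.cc_zero p)]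
  have hv4 : CHadAux.HH p u u = 1 := by
    rw [CHadAux.HH_apply, e1, sub_self, CHadAux.gg_of_cc_zero p (CHadAux.cc_zero p)]
  have hquad : CHadAux.HH p z0 u * CHadAux.HH p u z0
      * (starRingEnd ℂ) (CHadAux.HH p z0 z0) * (starRingEnd ℂ) (CHadAux.HH p u u)
      = CHadAux.aa p ^ 2 := by
    rw [hv1, hv2, hv3, hv4, _root_.map_one]
    ring
  set A := σ z0
  set B := τ.symm u
  set C := σ u
  set D := τ.symm z0
  have hquad2 : CHadAux.HH p z0 u * CHadAux.HH p u z0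
      * (starRingEnd ℂ) (CHadAux.HH p z0 z0) * (starRingEnd ℂ) (CHadAux.HH p u u)
      = FourierMatrix p A B * FourierMatrix p C D
        * (starRingEnd ℂ) (FourierMatrix p A D)
        * (starRingEnd ℂ) (FourierMatrix p C B) := by
    rw [hent z0 u, hent u z0, hent z0 z0, hent u u]
    simp only [_root_.map_mul]
    have u1 := CHadAux.unimod_mul_conj (h1 A)
    have u2 := CHadAux.unimod_mul_conj (h1 C)
    have u3 := CHadAux.unimod_mul_conj (h2 B)
    have u4 := CHadAux.unimod_mul_conj (h2 D)
    calc d₁ A * FourierMatrix p A B * d₂ B * (d₁ C * FourierMatrix p C D * d₂ D)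
          * ((starRingEnd ℂ) (d₁ A) * (starRingEnd ℂ) (FourierMatrix p A D)
            * (starRingEnd ℂ) (d₂ D))
          * ((starRingEnd ℂ) (d₁ C) * (starRingEnd ℂ) (FourierMatrix p C B)
            * (starRingEnd ℂ) (d₂ B))
        = (d₁ A * (starRingEnd ℂ) (d₁ A)) * (d₁ C * (starRingEnd ℂ) (d₁ C))
          * (d₂ B * (starRingEnd ℂ) (d₂ B)) * (d₂ D * (starRingEnd ℂ) (d₂ D))
          * (FourierMatrix p A B * FourierMatrix p C D
            * (starRingEnd ℂ) (FourierMatrix p A D)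
            * (starRingEnd ℂ) (FourierMatrix p C B)) := by ring
      _ = FourierMatrix p A B * FourierMatrix p C D
            * (starRingEnd ℂ) (FourierMatrix p A D)
            * (starRingEnd ℂ) (FourierMatrix p C B) := by
          rw [u1, u2, u3, u4]
          ring
  have hfq := CHadAux.fourier_quad p (by omega) A B C D
  have hfinal : (CHadAux.aa p) ^ (2 * p) = 1 := by
    rw [pow_mul]
    rw [← hquad, hquad2]
    exact hfq
  exact CHadAux.aa_pow_ne_one p hmod hp13 hfinal
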